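/- Let a, L > 0 and define on the cuboid R = (-a/2, a/2) × (-b/2, b/2) × (-L, 0) the field E(x,y,z) = (0, cos(πx/a) sin(πz/L), 0). Then div E = 0 in R, E vanishes on the faces {x = ±a/2}, {z = -L}, {z = 0}, E × ν = 0 on all of ∂R, and ∫_R |curl E|² dx = (π²/a² + π²/L²) ∫_R |E|² dx. -/

import Mathlib

open MeasureTheory Real Set

noncomputable section

/-- Partial derivative in the first coordinate of a function on `ℝ³ = ℝ × ℝ × ℝ`. -/
def px (f : ℝ × ℝ × ℝ → ℝ) (x : ℝ × ℝ × ℝ) : ℝ := fderiv ℝ f x (1, 0, 0)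

/-- Partial derivative in the second coordinate. -/
def py (f : ℝ × ℝ × ℝ → ℝ) (x : ℝ × ℝ × ℝ) : ℝ := fderiv ℝ f x (0, 1, 0)

/-- Partial derivative in the third coordinate. -/
def pz (f : ℝ × ℝ × ℝ → ℝ) (x : ℝ × ℝ × ℝ) : ℝ := fderiv ℝ f x (0, 0, 1)

/-- Divergence of the vector field with components `E1, E2, E3`. -/
def div3 (E1 E2 E3 : ℝ × ℝ × ℝ → ℝ) (x : ℝ × ℝ × ℝ) : ℝ :=
  px E1 x + py E2 x + pz E3 x

/-- First component of the curl. -/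
def curlFst (E1 E2 E3 : ℝ × ℝ × ℝ → ℝ) (x : ℝ × ℝ × ℝ) : ℝ := py E3 x - pz E2 x

/-- Second component of the curl. -/
def curlSnd (E1 E2 E3 : ℝ × ℝ × ℝ → ℝ) (x : ℝ × ℝ × ℝ) : ℝ := pz E1 x - px E3 x

/-- Third component of the curl. -/
def curlTrd (E1 E2 E3 : ℝ × ℝ × ℝ → ℝ) (x : ℝ × ℝ × ℝ) : ℝ := px E2 x - py E1 x

/-- Partial derivative in the first coordinate of a function on `ℝ²`. -/
def pu (f : ℝ × ℝ → ℝ) (p : ℝ × ℝ) : ℝ := fderiv ℝ f p (1, 0)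

/-- Partial derivative in the second coordinate of a function on `ℝ²`. -/
def pv (f : ℝ × ℝ → ℝ) (p : ℝ × ℝ) : ℝ := fderiv ℝ f p (0, 1)

/-- 2D Laplacian. -/
def lap2 (f : ℝ × ℝ → ℝ) (p : ℝ × ℝ) : ℝ := pu (pu f) p + pv (pv f) p

end

/-- Cross product on `ℝ³ = ℝ × ℝ × ℝ`. -/
noncomputable def cross3 (u v : ℝ × ℝ × ℝ) : ℝ × ℝ × ℝ :=
  (u.2.1 * v.2.2 - u.2.2 * v.2.1, u.2.2 * v.1 - u.1 * v.2.2, u.1 * v.2.1 - u.2.1 * v.1)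

noncomputable def c1 : ℝ × ℝ × ℝ →L[ℝ] ℝ := ContinuousLinearMap.fst ℝ ℝ (ℝ × ℝ)
noncomputable def c3 : ℝ × ℝ × ℝ →L[ℝ] ℝ :=
  (ContinuousLinearMap.snd ℝ ℝ ℝ).comp (ContinuousLinearMap.snd ℝ ℝ (ℝ × ℝ))

noncomputable def E2f (a L : ℝ) : ℝ × ℝ × ℝ → ℝ :=
  fun x => Real.cos (π * x.1 / a) * Real.sin (π * x.2.2 / L)

lemma hE2 (a L : ℝ) (x : ℝ × ℝ × ℝ) :
    HasFDerivAt (fun x : ℝ × ℝ × ℝ => Real.cos (π * x.1 / a) * Real.sin (π * x.2.2 / L))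
      ((Real.cos (π * x.1 / a) • ((Real.cos (π * x.2.2 / L)) • ((π/L) • c3)))
        + (Real.sin (π * x.2.2 / L) • ((-Real.sin (π * x.1 / a)) • ((π/a) • c1)))) x := by
  have hg1 : HasFDerivAt (fun x : ℝ × ℝ × ℝ => π * x.1 / a) ((π/a) • c1) x := by
    have := (c1.hasFDerivAt (x := x)).const_smul (π/a)
    have he : (fun x : ℝ × ℝ × ℝ => π * x.1 / a) = fun x => (π/a) • (c1 x) := by
      funext y; simp [c1, smul_eq_mul]; ring
    rw [he]; exact this
  have hg2 : HasFDerivAt (fun x : ℝ × ℝ × ℝ => π * x.2.2 / L) ((π/L) • c3) x := by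
    have := (c3.hasFDerivAt (x := x)).const_smul (π/L)
    have he : (fun x : ℝ × ℝ × ℝ => π * x.2.2 / L) = fun x => (π/L) • (c3 x) := by
      funext y; simp [c3, smul_eq_mul]; ring
    rw [he]; exact this
  have hcos : HasFDerivAt (fun x : ℝ × ℝ × ℝ => Real.cos (π * x.1 / a))
      ((-Real.sin (π * x.1 / a)) • ((π/a) • c1)) x :=
    (Real.hasDerivAt_cos _).comp_hasFDerivAt x hg1
  have hsin : HasFDerivAt (fun x : ℝ × ℝ × ℝ => Real.sin (π * x.2.2 / L))
      ((Real.cos (π * x.2.2 / L)) • ((π/L) • c3)) x :=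
    (Real.hasDerivAt_sin _).comp_hasFDerivAt x hg2
  exact hcos.mul hsin

lemma fderiv_E2 (a L : ℝ) (x : ℝ × ℝ × ℝ) (v : ℝ × ℝ × ℝ) :
    fderiv ℝ (E2f a L) x v
      = Real.cos (π * x.1 / a) * (Real.cos (π * x.2.2 / L) * ((π/L) * v.2.2))
        + Real.sin (π * x.2.2 / L) * ((-Real.sin (π * x.1 / a)) * ((π/a) * v.1)) := by
  rw [show E2f a L = fun x : ℝ × ℝ × ℝ => Real.cos (π * x.1 / a) * Real.sin (π * x.2.2 / L)
    from rfl, (hE2 a L x).fderiv]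
  simp [c1, c3, smul_eq_mul]

lemma ioo_eq (f : ℝ → ℝ) (p q : ℝ) (h : p ≤ q) :
    ∫ x in Ioo p q, f x = ∫ x in p..q, f x := by
  rw [intervalIntegral.integral_of_le h, MeasureTheory.integral_Ioc_eq_integral_Ioo]

lemma cos_sq_half (A : ℝ) (hA : 0 < A) :
    ∫ x in Ioo (-(A/2)) (A/2), Real.cos (π * x / A) ^ 2 = A / 2 := by
  have hc : (π/A) ≠ 0 := div_ne_zero pi_ne_zero hA.ne'
  rw [ioo_eq _ _ _ (by linarith)]
  have he : ∀ x : ℝ, Real.cos (π * x / A) ^ 2 = (fun t => Real.cos t ^ 2) ((π/A) * x) := by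
    intro x; simp only; ring_nf
  rw [intervalIntegral.integral_congr (fun x _ => he x),
    intervalIntegral.integral_comp_mul_left (fun t => Real.cos t ^ 2) hc]
  have e1 : (π/A) * (-(A/2)) = -(π/2) := by field_simp; try ring
  have e2 : (π/A) * (A/2) = π/2 := by field_simp; try ring
  rw [e1, e2, integral_cos_sq]
  simp [smul_eq_mul]
  try field_simp
  try ring

lemma sin_sq_half (A : ℝ) (hA : 0 < A) :
    ∫ x in Ioo (-(A/2)) (A/2), Real.sin (π * x / A) ^ 2 = A / 2 := by
  have hc : (π/A) ≠ 0 := div_ne_zero pi_ne_zero hA.ne'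
  rw [ioo_eq _ _ _ (by linarith)]
  have he : ∀ x : ℝ, Real.sin (π * x / A) ^ 2 = (fun t => Real.sin t ^ 2) ((π/A) * x) := by
    intro x; simp only; ring_nf
  rw [intervalIntegral.integral_congr (fun x _ => he x),
    intervalIntegral.integral_comp_mul_left (fun t => Real.sin t ^ 2) hc]
  have e1 : (π/A) * (-(A/2)) = -(π/2) := by field_simp; try ring
  have e2 : (π/A) * (A/2) = π/2 := by field_simp; try ring
  rw [e1, e2, integral_sin_sq]
  simp [smul_eq_mul]
  try field_simp
  try ring

lemma sin_sq_L (L : ℝ) (hL : 0 < L) :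
    ∫ x in Ioo (-L) 0, Real.sin (π * x / L) ^ 2 = L / 2 := by
  have hc : (π/L) ≠ 0 := div_ne_zero pi_ne_zero hL.ne'
  rw [ioo_eq _ _ _ (by linarith)]
  have he : ∀ x : ℝ, Real.sin (π * x / L) ^ 2 = (fun t => Real.sin t ^ 2) ((π/L) * x) := by
    intro x; simp only; ring_nf
  rw [intervalIntegral.integral_congr (fun x _ => he x),
    intervalIntegral.integral_comp_mul_left (fun t => Real.sin t ^ 2) hc]
  have e1 : (π/L) * (-L) = -π := by field_simp
  have e2 : (π/L) * 0 = 0 := by ring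
  rw [e1, e2, integral_sin_sq]
  simp [smul_eq_mul]
  try field_simp
  try ring

lemma cos_sq_L (L : ℝ) (hL : 0 < L) :
    ∫ x in Ioo (-L) 0, Real.cos (π * x / L) ^ 2 = L / 2 := by
  have hc : (π/L) ≠ 0 := div_ne_zero pi_ne_zero hL.ne'
  rw [ioo_eq _ _ _ (by linarith)]
  have he : ∀ x : ℝ, Real.cos (π * x / L) ^ 2 = (fun t => Real.cos t ^ 2) ((π/L) * x) := by
    intro x; simp only; ring_nf
  rw [intervalIntegral.integral_congr (fun x _ => he x),
    intervalIntegral.integral_comp_mul_left (fun t => Real.cos t ^ 2) hc]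
  have e1 : (π/L) * (-L) = -π := by field_simp
  have e2 : (π/L) * 0 = 0 := by ring
  rw [e1, e2, integral_cos_sq]
  simp [smul_eq_mul]
  try field_simp
  try ring

lemma split3 (f g : ℝ → ℝ) (p q r s t u : ℝ) (hrs : r ≤ s) :
    ∫ x in (Ioo p q) ×ˢ (Ioo r s) ×ˢ (Ioo t u), f x.1 * g x.2.2
      = (∫ x in Ioo p q, f x) * ((s - r) * ∫ z in Ioo t u, g z) := by
  rw [MeasureTheory.Measure.volume_eq_prod, ← MeasureTheory.Measure.prod_restrict]
  have h := MeasureTheory.integral_prod_mul (μ := volume.restrict (Ioo p q))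
    (ν := (volume : Measure (ℝ × ℝ)).restrict ((Ioo r s) ×ˢ (Ioo t u))) f (fun y : ℝ × ℝ => g y.2)
  rw [h]
  congr 1
  rw [MeasureTheory.Measure.volume_eq_prod, ← MeasureTheory.Measure.prod_restrict]
  have h2 := MeasureTheory.integral_prod_mul (μ := volume.restrict (Ioo r s))
    (ν := volume.restrict (Ioo t u)) (fun _ : ℝ => (1:ℝ)) g
  simp only [one_mul] at h2
  rw [h2]
  congr 1
  simp [Real.volume_Ioo, ENNReal.toReal_ofReal (by linarith : (0:ℝ) ≤ s - r)]
  exact hrs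

theorem stmt8 (a b L : ℝ) (ha : 0 < a) (hb : 0 < b) (hL : 0 < L) :
    let R : Set (ℝ × ℝ × ℝ) := (Ioo (-(a/2)) (a/2)) ×ˢ (Ioo (-(b/2)) (b/2)) ×ˢ (Ioo (-L) 0)
    let E1 : ℝ × ℝ × ℝ → ℝ := fun _ => 0
    let E2 : ℝ × ℝ × ℝ → ℝ := fun x => Real.cos (π * x.1 / a) * Real.sin (π * x.2.2 / L)
    let E3 : ℝ × ℝ × ℝ → ℝ := fun _ => 0
    (∀ x ∈ R, div3 E1 E2 E3 x = 0) ∧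
    (∀ x ∈ closure R, (x.1 = a/2 ∨ x.1 = -(a/2) ∨ x.2.2 = -L ∨ x.2.2 = 0) →
        E1 x = 0 ∧ E2 x = 0 ∧ E3 x = 0) ∧
    (∀ x ∈ closure R,
        (x.1 = a/2 → cross3 (E1 x, E2 x, E3 x) (1, 0, 0) = 0) ∧
        (x.1 = -(a/2) → cross3 (E1 x, E2 x, E3 x) (-1, 0, 0) = 0) ∧
        (x.2.1 = b/2 → cross3 (E1 x, E2 x, E3 x) (0, 1, 0) = 0) ∧
        (x.2.1 = -(b/2) → cross3 (E1 x, E2 x, E3 x) (0, -1, 0) = 0) ∧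
        (x.2.2 = 0 → cross3 (E1 x, E2 x, E3 x) (0, 0, 1) = 0) ∧
        (x.2.2 = -L → cross3 (E1 x, E2 x, E3 x) (0, 0, -1) = 0)) ∧
    (∫ x in R, ((curlFst E1 E2 E3 x) ^ 2 + (curlSnd E1 E2 E3 x) ^ 2
          + (curlTrd E1 E2 E3 x) ^ 2))
      = (π ^ 2 / a ^ 2 + π ^ 2 / L ^ 2) * ∫ x in R, (E1 x ^ 2 + E2 x ^ 2 + E3 x ^ 2) := by
  intro R E1 E2 E3
  have hzero : ∀ y : ℝ × ℝ × ℝ, fderiv ℝ (fun _ : ℝ × ℝ × ℝ => (0:ℝ)) y = 0 := by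
    intro y; exact fderiv_const_apply 0
  -- E2 vanishes on the relevant faces
  have hEz : ∀ x : ℝ × ℝ × ℝ, (x.1 = a/2 ∨ x.1 = -(a/2) ∨ x.2.2 = -L ∨ x.2.2 = 0) →
      Real.cos (π * x.1 / a) * Real.sin (π * x.2.2 / L) = 0 := by
    intro x hx
    rcases hx with h | h | h | h
    · rw [h, show π * (a/2) / a = π/2 by field_simp, Real.cos_pi_div_two, zero_mul]
    · rw [h, show π * (-(a/2)) / a = -(π/2) by field_simp, Real.cos_neg,
        Real.cos_pi_div_two, zero_mul]
    · rw [h, show π * (-L) / L = -π by field_simp, Real.sin_neg, Real.sin_pi, neg_zero, mul_zero]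
    · rw [h, show π * (0:ℝ) / L = 0 by ring, Real.sin_zero, mul_zero]
  refine ⟨?_, ?_, ?_, ?_⟩
  · -- divergence free
    intro x _
    show div3 (fun _ => (0:ℝ)) (E2f a L) (fun _ => (0:ℝ)) x = 0
    have h2 : py (E2f a L) x = 0 := by
      show fderiv ℝ (E2f a L) x (0, 1, 0) = 0
      rw [fderiv_E2]; norm_num
    unfold div3 px pz
    rw [h2]
    simp [hzero]
  · intro x _ hx
    exact ⟨rfl, hEz x hx, rfl⟩
  · intro x _
    refine ⟨fun h => ?_, fun h => ?_, fun h => ?_, fun h => ?_, fun h => ?_, fun h => ?_⟩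
    · show cross3 (0, E2 x, 0) (1, 0, 0) = 0
      rw [show E2 x = 0 from hEz x (Or.inl h)]; simp [cross3, Prod.ext_iff]
    · show cross3 (0, E2 x, 0) (-1, 0, 0) = 0
      rw [show E2 x = 0 from hEz x (Or.inr (Or.inl h))]; simp [cross3, Prod.ext_iff]
    · show cross3 (0, E2 x, 0) (0, 1, 0) = 0
      simp [cross3, Prod.ext_iff]
    · show cross3 (0, E2 x, 0) (0, -1, 0) = 0
      simp [cross3, Prod.ext_iff]
    · show cross3 (0, E2 x, 0) (0, 0, 1) = 0
      rw [show E2 x = 0 from hEz x (Or.inr (Or.inr (Or.inr h)))]; simp [cross3, Prod.ext_iff]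
    · show cross3 (0, E2 x, 0) (0, 0, -1) = 0
      rw [show E2 x = 0 from hEz x (Or.inr (Or.inr (Or.inl h)))]; simp [cross3, Prod.ext_iff]
  · -- the Rayleigh identity
    have hab2 : -(b/2) ≤ b/2 := by linarith
    have hcurl1 : ∀ x : ℝ × ℝ × ℝ, curlFst E1 E2 E3 x
        = -((π/L) * (Real.cos (π * x.1 / a) * Real.cos (π * x.2.2 / L))) := by
      intro x
      show py (fun _ => (0:ℝ)) x - pz (E2f a L) x = _
      have h3 : pz (E2f a L) x = (π/L) * (Real.cos (π * x.1 / a) * Real.cos (π * x.2.2 / L)) := by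
        show fderiv ℝ (E2f a L) x (0, 0, 1) = _
        rw [fderiv_E2]; norm_num; ring
      unfold py
      rw [h3]
      simp [hzero]
    have hcurl2 : ∀ x : ℝ × ℝ × ℝ, curlSnd E1 E2 E3 x = 0 := by
      intro x
      show pz (fun _ => (0:ℝ)) x - px (fun _ => (0:ℝ)) x = 0
      unfold pz px
      simp [hzero]
    have hcurl3 : ∀ x : ℝ × ℝ × ℝ, curlTrd E1 E2 E3 x
        = -((π/a) * (Real.sin (π * x.1 / a) * Real.sin (π * x.2.2 / L))) := by
      intro x
      show px (E2f a L) x - py (fun _ => (0:ℝ)) x = _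
      have h1 : px (E2f a L) x = -((π/a) * (Real.sin (π * x.1 / a) * Real.sin (π * x.2.2 / L))) := by
        show fderiv ℝ (E2f a L) x (1, 0, 0) = _
        rw [fderiv_E2]; norm_num; ring
      unfold py
      rw [h1]
      simp [hzero]
    -- rewrite both integrands
    have hL1 : (∫ x in R, ((curlFst E1 E2 E3 x) ^ 2 + (curlSnd E1 E2 E3 x) ^ 2
          + (curlTrd E1 E2 E3 x) ^ 2))
        = ∫ x in R, ((π/L)^2 * ((fun u => Real.cos (π * u / a) ^ 2) x.1
              * (fun w => Real.cos (π * w / L) ^ 2) x.2.2)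
            + (π/a)^2 * ((fun u => Real.sin (π * u / a) ^ 2) x.1
              * (fun w => Real.sin (π * w / L) ^ 2) x.2.2)) := by
      refine MeasureTheory.setIntegral_congr_fun (measurableSet_Ioo.prod (measurableSet_Ioo.prod measurableSet_Ioo)) ?_
      intro x _
      beta_reduce
      rw [hcurl1 x, hcurl2 x, hcurl3 x]
      ring
    have hR1 : (∫ x in R, (E1 x ^ 2 + E2 x ^ 2 + E3 x ^ 2))
        = ∫ x in R, ((fun u => Real.cos (π * u / a) ^ 2) x.1
            * (fun w => Real.sin (π * w / L) ^ 2) x.2.2) := by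
      refine MeasureTheory.setIntegral_congr_fun (measurableSet_Ioo.prod (measurableSet_Ioo.prod measurableSet_Ioo)) ?_
      intro x _
      show (0:ℝ)^2 + (Real.cos (π * x.1 / a) * Real.sin (π * x.2.2 / L))^2 + 0^2 = _
      beta_reduce
      ring
    -- integrability of the two summands
    have hcompact : IsCompact ((Icc (-(a/2)) (a/2)) ×ˢ (Icc (-(b/2)) (b/2)) ×ˢ (Icc (-L) (0:ℝ))) :=
      isCompact_Icc.prod (isCompact_Icc.prod isCompact_Icc)
    have hsub : R ⊆ (Icc (-(a/2)) (a/2)) ×ˢ (Icc (-(b/2)) (b/2)) ×ˢ (Icc (-L) (0:ℝ)) :=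
      Set.prod_mono Ioo_subset_Icc_self (Set.prod_mono Ioo_subset_Icc_self Ioo_subset_Icc_self)
    have hintOn : ∀ F : ℝ × ℝ × ℝ → ℝ, Continuous F → IntegrableOn F R := by
      intro F hF
      exact ((hF.continuousOn).integrableOn_compact hcompact).mono_set hsub
    have hIA : IntegrableOn (fun x : ℝ × ℝ × ℝ => (π/L)^2 * ((fun u => Real.cos (π * u / a) ^ 2) x.1
        * (fun w => Real.cos (π * w / L) ^ 2) x.2.2)) R := by
      apply hintOn; fun_prop
    have hIB : IntegrableOn (fun x : ℝ × ℝ × ℝ => (π/a)^2 * ((fun u => Real.sin (π * u / a) ^ 2) x.1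
        * (fun w => Real.sin (π * w / L) ^ 2) x.2.2)) R := by
      apply hintOn; fun_prop
    rw [hL1, hR1, MeasureTheory.integral_add hIA hIB,
      MeasureTheory.integral_const_mul, MeasureTheory.integral_const_mul]
    have hsA := split3 (fun u => Real.cos (π * u / a) ^ 2) (fun w => Real.cos (π * w / L) ^ 2)
      (-(a/2)) (a/2) (-(b/2)) (b/2) (-L) 0 hab2
    have hsB := split3 (fun u => Real.sin (π * u / a) ^ 2) (fun w => Real.sin (π * w / L) ^ 2)
      (-(a/2)) (a/2) (-(b/2)) (b/2) (-L) 0 hab2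
    have hsC := split3 (fun u => Real.cos (π * u / a) ^ 2) (fun w => Real.sin (π * w / L) ^ 2)
      (-(a/2)) (a/2) (-(b/2)) (b/2) (-L) 0 hab2
    show (π/L)^2 * (∫ x in R, _) + (π/a)^2 * (∫ x in R, _) = _
    rw [show R = (Ioo (-(a/2)) (a/2)) ×ˢ (Ioo (-(b/2)) (b/2)) ×ˢ (Ioo (-L) 0) from rfl,
      hsA, hsB, hsC]
    rw [cos_sq_half a ha, sin_sq_half a ha, cos_sq_L L hL, sin_sq_L L hL]
    have hπ := pi_ne_zero
    field_simp
    ring
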